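/- Let (X,d) be a CAT(0) space, A ⊆ X nonempty and convex, and consider a play of the Lion-Man game in A with speed D > 0 in which the man wins (equivalently, D_n > D for all n ∈ ℕ and lim_{n→∞} D_n > D). Then the comparison angles ∠̄_{L_n}(M_{n−1},M_n) tend to 0 as n → ∞, and the Alexandrov angles β_n = ∠_{L_n}(L_{n−1},M_n) tend to π as n → ∞. -/

import Mathlib

open Set Filter Metric

section Defs

variable {X : Type*} [MetricSpace X]

/-- A unit-speed geodesic defined on `[a, b]`. -/
def IsGeodesicOn (γ : ℝ → X) (a b : ℝ) : Prop :=
  ∀ s ∈ Set.Icc a b, ∀ t ∈ Set.Icc a b, dist (γ s) (γ t) = |s - t|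

/-- `S` is a geodesic segment joining `x` and `y`. -/
def IsGeodesicSegment (S : Set X) (x y : X) : Prop :=
  ∃ (a b : ℝ) (γ : ℝ → X), a ≤ b ∧ IsGeodesicOn γ a b ∧ γ a = x ∧ γ b = y ∧
    S = γ '' Set.Icc a b

/-- A geodesic space: every two points are joined by a geodesic segment. -/
def GeodesicSpace (X : Type*) [MetricSpace X] : Prop :=
  ∀ x y : X, ∃ S : Set X, IsGeodesicSegment S x y

/-- A uniquely geodesic space. -/
def UniquelyGeodesic (X : Type*) [MetricSpace X] : Prop :=
  ∀ x y : X, ∃! S : Set X, IsGeodesicSegment S x y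

/-- `S` is contained in the closed `M`-neighborhood of `T`. -/
def InClosedNbhd (S T : Set X) (M : ℝ) : Prop :=
  ∀ p ∈ S, ∃ q ∈ T, dist p q ≤ M

/-- A triangle with sides `S1, S2, S3` is `M`-slim. -/
def SlimTriangle (S1 S2 S3 : Set X) (M : ℝ) : Prop :=
  InClosedNbhd S1 (S2 ∪ S3) M ∧ InClosedNbhd S2 (S1 ∪ S3) M ∧ InClosedNbhd S3 (S1 ∪ S2) M

/-- `X` is `δ`-hyperbolic: every geodesic triangle is `δ`-slim. -/
def DeltaHyperbolic (X : Type*) [MetricSpace X] (δ : ℝ) : Prop :=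
  ∀ x y z : X, ∀ S1 S2 S3 : Set X,
    IsGeodesicSegment S1 x y → IsGeodesicSegment S2 y z → IsGeodesicSegment S3 z x →
    SlimTriangle S1 S2 S3 δ

/-- A geodesic ray `γ : [0, ∞) → X`. -/
def IsGeodesicRay (γ : ℝ → X) : Prop :=
  ∀ s ∈ Set.Ici (0:ℝ), ∀ t ∈ Set.Ici (0:ℝ), dist (γ s) (γ t) = |s - t|

/-- A set is geodesically bounded if it contains no geodesic ray. -/
def GeodesicallyBounded (A : Set X) : Prop :=
  ¬ ∃ γ : ℝ → X, IsGeodesicRay γ ∧ ∀ t ∈ Set.Ici (0:ℝ), γ t ∈ A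

/-- A directional curve `γ : [0, ∞) → X` (with some constant `b ≥ 0`). -/
def IsDirectionalCurve (γ : ℝ → X) : Prop :=
  ∃ b : ℝ, 0 ≤ b ∧ ∀ s ∈ Set.Ici (0:ℝ), ∀ t ∈ Set.Ici (0:ℝ),
    |s - t| - b ≤ dist (γ s) (γ t) ∧ dist (γ s) (γ t) ≤ |s - t|

/-- A set is directionally bounded if it contains no directional curve. -/
def DirectionallyBounded (A : Set X) : Prop :=
  ¬ ∃ γ : ℝ → X, IsDirectionalCurve γ ∧ ∀ t ∈ Set.Ici (0:ℝ), γ t ∈ A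

/-- A subset of a geodesic space is convex if every geodesic segment joining two of its
points is contained in it. -/
def GeodesicConvex (A : Set X) : Prop :=
  ∀ x ∈ A, ∀ y ∈ A, ∀ S : Set X, IsGeodesicSegment S x y → S ⊆ A

/-- The comparison point in the Euclidean plane: the point on the segment from `x'` to `y'`
(of length `L`) at distance `t` from `x'`. -/
noncomputable def cmpPt (x' y' : EuclideanSpace ℝ (Fin 2)) (L t : ℝ) :
    EuclideanSpace ℝ (Fin 2) :=
  AffineMap.lineMap x' y' (t / L)

/-- `X` is a CAT(0) space: it is geodesic and for every geodesic triangle and every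
comparison triangle in the Euclidean plane, distances between points on the triangle are
bounded by the distances between the corresponding comparison points. -/
def CAT0Space (X : Type*) [MetricSpace X] : Prop :=
  GeodesicSpace X ∧
  ∀ (x y z : X) (γ1 γ2 γ3 : ℝ → X),
    IsGeodesicOn γ1 0 (dist x y) → γ1 0 = x → γ1 (dist x y) = y →
    IsGeodesicOn γ2 0 (dist y z) → γ2 0 = y → γ2 (dist y z) = z →
    IsGeodesicOn γ3 0 (dist z x) → γ3 0 = z → γ3 (dist z x) = x →
    ∀ x' y' z' : EuclideanSpace ℝ (Fin 2),
      dist x' y' = dist x y → dist y' z' = dist y z → dist z' x' = dist z x →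
      (∀ s ∈ Set.Icc (0:ℝ) (dist x y), ∀ t ∈ Set.Icc (0:ℝ) (dist y z),
        dist (γ1 s) (γ2 t) ≤ dist (cmpPt x' y' (dist x y) s) (cmpPt y' z' (dist y z) t)) ∧
      (∀ s ∈ Set.Icc (0:ℝ) (dist y z), ∀ t ∈ Set.Icc (0:ℝ) (dist z x),
        dist (γ2 s) (γ3 t) ≤ dist (cmpPt y' z' (dist y z) s) (cmpPt z' x' (dist z x) t)) ∧
      (∀ s ∈ Set.Icc (0:ℝ) (dist z x), ∀ t ∈ Set.Icc (0:ℝ) (dist x y),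
        dist (γ3 s) (γ1 t) ≤ dist (cmpPt z' x' (dist z x) s) (cmpPt x' y' (dist x y) t))

/-- Busemann convexity. -/
def BusemannConvex (X : Type*) [MetricSpace X] : Prop :=
  GeodesicSpace X ∧
  ∀ (a b c d : ℝ) (γ σ : ℝ → X), a ≤ b → c ≤ d →
    IsGeodesicOn γ a b → IsGeodesicOn σ c d →
    ∀ t ∈ Set.Icc (0:ℝ) 1,
      dist (γ ((1-t)*a + t*b)) (σ ((1-t)*c + t*d)) ≤
        (1-t) * dist (γ a) (σ c) + t * dist (γ b) (σ d)

/-- A `(lam, eps)`-quasi-geodesic defined on `[a, b]`. -/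
def IsQuasiGeodesicOn (lam eps : ℝ) (γ : ℝ → X) (a b : ℝ) : Prop :=
  ∀ s ∈ Set.Icc a b, ∀ t ∈ Set.Icc a b,
    (1/lam) * |s - t| - eps ≤ dist (γ s) (γ t) ∧ dist (γ s) (γ t) ≤ lam * |s - t| + eps

/-- A `(lam, eps)`-quasi-geodesic ray. -/
def IsQuasiGeodesicRay (lam eps : ℝ) (γ : ℝ → X) : Prop :=
  ∀ s ∈ Set.Ici (0:ℝ), ∀ t ∈ Set.Ici (0:ℝ),
    (1/lam) * |s - t| - eps ≤ dist (γ s) (γ t) ∧ dist (γ s) (γ t) ≤ lam * |s - t| + eps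

/-- A `k`-local `lam`-quasi-geodesic ray: a `(lam, eps)`-quasi-geodesic ray locally,
for every `eps > 0`. -/
def IsLocalQuasiGeodesicRay (k lam : ℝ) (γ : ℝ → X) : Prop :=
  ∀ eps > (0:ℝ), ∀ s ∈ Set.Ici (0:ℝ), ∀ t ∈ Set.Ici (0:ℝ), |s - t| ≤ k →
    (1/lam) * |s - t| - eps ≤ dist (γ s) (γ t) ∧ dist (γ s) (γ t) ≤ lam * |s - t| + eps

/-- `S` is the image of a `lam`-quasi-geodesic joining `x` and `y`
(i.e. a `(lam, eps)`-quasi-geodesic for every `eps > 0`). -/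
def IsQuasiGeodesicSegment (lam : ℝ) (S : Set X) (x y : X) : Prop :=
  ∃ (a b : ℝ) (γ : ℝ → X), a ≤ b ∧ (∀ eps > (0:ℝ), IsQuasiGeodesicOn lam eps γ a b) ∧
    γ a = x ∧ γ b = y ∧ S = γ '' Set.Icc a b

/-- Every `lam`-quasi-geodesic triangle in `X` is `M`-slim. -/
def QuasiGeodesicTrianglesSlim (X : Type*) [MetricSpace X] (lam M : ℝ) : Prop :=
  ∀ x y z : X, ∀ S1 S2 S3 : Set X,
    IsQuasiGeodesicSegment lam S1 x y → IsQuasiGeodesicSegment lam S2 y z →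
    IsQuasiGeodesicSegment lam S3 z x → SlimTriangle S1 S2 S3 M

/-- A play of the Lion-Man game in `A` with speed `D`. -/
def IsLionManPlay (A : Set X) (D : ℝ) (L M : ℕ → X) : Prop :=
  (∀ n, L n ∈ A) ∧ (∀ n, M n ∈ A) ∧
  (∀ n, ∃ S : Set X, IsGeodesicSegment S (L n) (M n) ∧ L (n+1) ∈ S) ∧
  (∀ n, dist (L n) (L (n+1)) = min D (dist (L n) (M n))) ∧
  (∀ n, dist (M n) (M (n+1)) ≤ D)

/-- The lion wins a play if `d(L_{n+1}, M_n) → 0`. -/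
def LionWins (L M : ℕ → X) : Prop :=
  Filter.Tendsto (fun n => dist (L (n+1)) (M n)) Filter.atTop (nhds 0)

/-- The lion always wins the Lion-Man game played in `A`. -/
def LionAlwaysWins (A : Set X) : Prop :=
  ∀ D > (0:ℝ), ∀ L M : ℕ → X, IsLionManPlay A D L M → LionWins L M

end Defs

/-- The comparison angle `∠̄_x(y, z)`: the interior angle at the vertex corresponding to
`x` in a Euclidean comparison triangle. -/
noncomputable def compAngle {X : Type*} [MetricSpace X] (x y z : X) : ℝ :=
  Real.arccos ((dist x y ^ 2 + dist x z ^ 2 - dist y z ^ 2) / (2 * dist x y * dist x z))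

/-- The Alexandrov angle at `x` between two unit-speed geodesics `γ`, `σ` issuing from
`x`: the limsup of comparison angles `∠̄_x(γ(t), σ(s))` as `t, s → 0⁺`. -/
noncomputable def alexAngle {X : Type*} [MetricSpace X] (x : X) (γ σ : ℝ → X) : ℝ :=
  Filter.limsup (fun p : ℝ × ℝ => compAngle x (γ p.1) (σ p.2))
    ((nhdsWithin 0 (Set.Ioi 0)) ×ˢ (nhdsWithin 0 (Set.Ioi 0)))

section Aux

open AffineMap

noncomputable def pt2 (p q : ℝ) : EuclideanSpace ℝ (Fin 2) :=
  (WithLp.equiv 2 (Fin 2 → ℝ)).symm ![p, q]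

lemma dist_pt2 (p q p' q' : ℝ) :
    dist (pt2 p q) (pt2 p' q') = Real.sqrt ((p - p') ^ 2 + (q - q') ^ 2) := by
  rw [EuclideanSpace.dist_eq]
  simp [pt2, Fin.sum_univ_two, Real.dist_eq, sq_abs]

variable {X : Type*} [MetricSpace X]

/-- Existence of a Euclidean comparison triangle. -/
lemma exists_cmp_triangle (x y z : X) :
    ∃ x' y' z' : EuclideanSpace ℝ (Fin 2),
      dist x' y' = dist x y ∧ dist y' z' = dist y z ∧ dist z' x' = dist z x := by
  set c := dist x y with hc
  set a := dist y z with ha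
  set b := dist z x with hb
  have hc0 : 0 ≤ c := dist_nonneg
  have ha0 : 0 ≤ a := dist_nonneg
  have hb0 : 0 ≤ b := dist_nonneg
  have tri1 : a ≤ c + b := by
    have := dist_triangle y x z
    rw [dist_comm y x, dist_comm x z] at this; exact this
  have tri2 : b ≤ a + c := by
    have := dist_triangle z y x
    rw [dist_comm z y, dist_comm y x] at this; exact this
  have tri3 : c ≤ a + b := by
    have := dist_triangle x z y
    rw [dist_comm x z, dist_comm z y] at this; linarith
  rcases eq_or_lt_of_le hc0 with hczero | hcpos
  · have hxy : x = y := by rw [← dist_le_zero, ← hc, ← hczero]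
    have hab : a = b := by rw [ha, hb, hxy, dist_comm]
    refine ⟨pt2 0 0, pt2 0 0, pt2 b 0, ?_, ?_, ?_⟩
    · rw [dist_pt2, ← hczero]; simp
    · rw [dist_pt2, show (0 - b) ^ 2 + ((0:ℝ) - 0) ^ 2 = b ^ 2 by ring, Real.sqrt_sq hb0, hab]
    · rw [dist_pt2, show (b - 0) ^ 2 + ((0:ℝ) - 0) ^ 2 = b ^ 2 by ring, Real.sqrt_sq hb0]
  · set p := (c ^ 2 + b ^ 2 - a ^ 2) / (2 * c) with hp
    have hkey : 0 ≤ b ^ 2 - p ^ 2 := by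
      rw [hp, sub_nonneg, div_pow, div_le_iff₀ (by positivity)]
      have h1 : 0 ≤ b + c - a := by linarith
      have h2 : 0 ≤ a + b + c := by linarith
      have h3 : 0 ≤ a + c - b := by linarith
      have h4 : 0 ≤ a + b - c := by linarith
      nlinarith [mul_nonneg (mul_nonneg (mul_nonneg h1 h2) h3) h4]
    set h := Real.sqrt (b ^ 2 - p ^ 2) with hh
    have hh2 : h ^ 2 = b ^ 2 - p ^ 2 := Real.sq_sqrt hkey
    refine ⟨pt2 0 0, pt2 c 0, pt2 p h, ?_, ?_, ?_⟩
    · rw [dist_pt2, show (0 - c) ^ 2 + ((0:ℝ) - 0) ^ 2 = c ^ 2 by ring, Real.sqrt_sq hc0]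
    · rw [dist_pt2, show (c - p) ^ 2 + (0 - h) ^ 2 = c ^ 2 - 2 * c * p + p ^ 2 + h ^ 2 by ring,
        hh2, show c ^ 2 - 2 * c * p + p ^ 2 + (b ^ 2 - p ^ 2) = c ^ 2 + b ^ 2 - 2 * c * p by ring,
        hp, show c ^ 2 + b ^ 2 - 2 * c * ((c ^ 2 + b ^ 2 - a ^ 2) / (2 * c)) = a ^ 2 by
          field_simp; ring,
        Real.sqrt_sq ha0]
    · rw [dist_pt2, show (p - 0) ^ 2 + (h - 0) ^ 2 = p ^ 2 + h ^ 2 by ring, hh2,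
        show p ^ 2 + (b ^ 2 - p ^ 2) = b ^ 2 by ring, Real.sqrt_sq hb0]

/-- Stewart-type formula for the distance from a point on a side of a Euclidean
triangle to the opposite vertex. -/
lemma dist_cmpPt_sq (x' y' z' : EuclideanSpace ℝ (Fin 2)) {L : ℝ} (hL : 0 < L)
    (hxy : dist x' y' = L) (t : ℝ) :
    dist (cmpPt x' y' L t) z' ^ 2
      = dist x' z' ^ 2 + t ^ 2
        - (t / L) * (dist x' z' ^ 2 + L ^ 2 - dist y' z' ^ 2) := by
  have hcm : cmpPt x' y' L t = (t / L) • (y' - x') + x' := by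
    rw [cmpPt, AffineMap.lineMap_apply_module]; module
  set r := t / L with hr
  set A := x' - z' with hA
  set B := y' - x' with hB
  have hBnorm : ‖B‖ = L := by
    rw [hB, ← hxy, dist_eq_norm, ← norm_neg]; congr 1; abel
  have hXnorm : dist x' z' = ‖A‖ := dist_eq_norm _ _
  have hYsq : dist y' z' ^ 2 = ‖B‖ ^ 2 + 2 * (inner ℝ B A) + ‖A‖ ^ 2 := by
    rw [dist_eq_norm, show y' - z' = B + A by rw [hB, hA]; abel]
    rw [@norm_add_sq_real]
  have hmain : dist (cmpPt x' y' L t) z' ^ 2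
      = ‖A‖ ^ 2 + 2 * (r * (inner ℝ A B)) + r ^ 2 * ‖B‖ ^ 2 := by
    rw [dist_eq_norm, hcm, show r • B + x' - z' = A + r • B by rw [hA, hB]; abel]
    rw [@norm_add_sq_real, real_inner_smul_right, norm_smul]
    rw [mul_pow, Real.norm_eq_abs, sq_abs]
  have hrL : r ^ 2 * L ^ 2 = t ^ 2 := by
    rw [hr]; field_simp
  rw [hmain, hXnorm, hYsq, hBnorm, real_inner_comm A B]
  have hrL2 : r * L = t := by rw [hr]; field_simp
  nlinarith [hrL, hrL2]

variable {X : Type*} [MetricSpace X]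

lemma segment_exists_unit {S : Set X} {x y : X} (h : IsGeodesicSegment S x y) :
    ∃ φ : ℝ → X, IsGeodesicOn φ 0 (dist x y) ∧ φ 0 = x ∧ φ (dist x y) = y ∧
      ∀ p ∈ S, ∃ u ∈ Set.Icc 0 (dist x y), φ u = p := by
  obtain ⟨a, b, γ, hab, hγ, hga, hgb, hS⟩ := h
  have hd : dist x y = b - a := by
    rw [← hga, ← hgb, hγ a ⟨le_rfl, hab⟩ b ⟨hab, le_rfl⟩, abs_sub_comm,
      abs_of_nonneg (by linarith)]
  refine ⟨fun r => γ (a + r), ?_, by simpa using hga, ?_, ?_⟩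
  · intro s hs t ht
    rw [hd] at hs ht
    have := hγ (a + s) ⟨by linarith [hs.1], by linarith [hs.2]⟩ (a + t)
      ⟨by linarith [ht.1], by linarith [ht.2]⟩
    simpa using this
  · rw [hd]; show γ (a + (b - a)) = y; rw [show a + (b - a) = b by ring]; exact hgb
  · intro p hp
    rw [hS] at hp
    obtain ⟨u, hu, hup⟩ := hp
    refine ⟨u - a, ⟨by linarith [hu.1], by rw [hd]; linarith [hu.2]⟩, ?_⟩
    show γ (a + (u - a)) = p; rw [show a + (u - a) = u by ring]; exact hup

/-- Normalized unit-speed geodesic between two points of a geodesic space. -/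
lemma exists_unit_geodesic (hX : GeodesicSpace X) (x y : X) :
    ∃ φ : ℝ → X, IsGeodesicOn φ 0 (dist x y) ∧ φ 0 = x ∧ φ (dist x y) = y := by
  obtain ⟨S, hS⟩ := hX x y
  obtain ⟨φ, h, h0, h1, -⟩ := segment_exists_unit hS
  exact ⟨φ, h, h0, h1⟩

end Aux
section Aux2

open AffineMap

variable {X : Type*} [MetricSpace X]

lemma arccos_antitone : Antitone Real.arccos := by
  intro x y h
  simp only [Real.arccos]
  have := Real.monotone_arcsin h
  linarith

lemma compAngle_def (x y z : X) :
    compAngle x y z = Real.arccos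
      ((dist x y ^ 2 + dist x z ^ 2 - dist y z ^ 2) / (2 * dist x y * dist x z)) := rfl

lemma compAngle_nonneg (x y z : X) : 0 ≤ compAngle x y z := Real.arccos_nonneg _

lemma compAngle_le_pi (x y z : X) : compAngle x y z ≤ Real.pi := Real.arccos_le_pi _

lemma alexAngle_def (x : X) (γ σ : ℝ → X) :
    alexAngle x γ σ = Filter.limsup (fun p : ℝ × ℝ => compAngle x (γ p.1) (σ p.2))
      ((nhdsWithin 0 (Set.Ioi 0)) ×ˢ (nhdsWithin 0 (Set.Ioi 0))) := rfl

/-- Geodesics between two points of a CAT(0) space are unique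
(as unit-speed parametrizations on `[0, d(x,y)]`). -/
lemma geodesic_unique (hX : CAT0Space X) {x y : X} {φ ψ : ℝ → X}
    (hφ : IsGeodesicOn φ 0 (dist x y)) (hφ0 : φ 0 = x) (hφ1 : φ (dist x y) = y)
    (hψ : IsGeodesicOn ψ 0 (dist x y)) (hψ0 : ψ 0 = x) (hψ1 : ψ (dist x y) = y) :
    ∀ t ∈ Set.Icc 0 (dist x y), φ t = ψ t := by
  intro t ht
  rcases eq_or_lt_of_le (dist_nonneg : (0:ℝ) ≤ dist x y) with he0 | hepos
  · have ht0 : t = 0 := le_antisymm (by rw [← he0] at ht; exact ht.2) ht.1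
    rw [ht0, hφ0, hψ0]
  · set e := dist x y with he
    have hγ2geo : IsGeodesicOn (fun r => ψ (e - r)) 0 (dist y x) := by
      rw [dist_comm y x, ← he]
      intro s hs u hu
      show dist (ψ (e - s)) (ψ (e - u)) = |s - u|
      rw [hψ (e - s) ⟨by linarith [hs.2], by linarith [hs.1]⟩ (e - u)
        ⟨by linarith [hu.2], by linarith [hu.1]⟩,
        show e - s - (e - u) = u - s by ring, abs_sub_comm]
    have hγ20 : (fun r => ψ (e - r)) 0 = y := by
      show ψ (e - 0) = y; rw [sub_zero]; exact hψ1
    have hγ21 : (fun r => ψ (e - r)) (dist y x) = x := by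
      show ψ (e - dist y x) = x
      rw [dist_comm y x, ← he, sub_self]; exact hψ0
    have hγ3geo : IsGeodesicOn (fun _ => x) 0 (dist x x) := by
      intro s hs u hu
      rw [dist_self] at hs hu
      have hs' : s = 0 := le_antisymm hs.2 hs.1
      have hu' : u = 0 := le_antisymm hu.2 hu.1
      simp [hs', hu']
    obtain ⟨x', y', z', hxy', hyz', hzx'⟩ := exists_cmp_triangle x y x
    have hz'x' : z' = x' := by
      rw [← dist_eq_zero (x := z') (y := x'), hzx', dist_self]
    obtain ⟨I1, -, -⟩ := hX.2 x y x φ (fun r => ψ (e - r)) (fun _ => x)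
      hφ hφ0 hφ1 hγ2geo hγ20 hγ21 hγ3geo rfl rfl x' y' z' hxy' hyz' hzx'
    have key := I1 t ht (e - t) (by
      rw [dist_comm y x, ← he]; exact ⟨by linarith [ht.2], by linarith [ht.1]⟩)
    have hL : dist (φ t) (ψ t) ≤ dist (cmpPt x' y' (dist x y) t)
        (cmpPt y' x' (dist y x) (e - t)) := by
      rw [hz'x'] at key
      convert key using 3
      rw [show e - (e - t) = t by ring]
    have hR : dist (cmpPt x' y' (dist x y) t) (cmpPt y' x' (dist y x) (e - t)) = 0 := by
      rw [cmpPt, cmpPt, dist_comm y x, ← he,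
        show (e - t) / e = 1 - t / e by field_simp,
        AffineMap.lineMap_apply_one_sub, dist_self]
    rw [hR] at hL
    exact dist_le_zero.mp hL

/-- CAT(0) comparison: the distance from a point on a side of a geodesic triangle to the
opposite vertex is bounded via the Euclidean (Stewart) formula. -/
lemma cat0_dist_point_vertex (hX : CAT0Space X) (x y z : X) {γ1 : ℝ → X}
    (h1 : IsGeodesicOn γ1 0 (dist x y)) (h10 : γ1 0 = x) (h11 : γ1 (dist x y) = y)
    (hL : 0 < dist x y) {t : ℝ} (ht : t ∈ Set.Icc 0 (dist x y)) :
    dist (γ1 t) z ^ 2 ≤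
      dist x z ^ 2 + t ^ 2
        - (t / dist x y) * (dist x z ^ 2 + dist x y ^ 2 - dist y z ^ 2) := by
  obtain ⟨γ2, h2, h20, h21⟩ := exists_unit_geodesic hX.1 y z
  obtain ⟨γ3, h3, h30, h31⟩ := exists_unit_geodesic hX.1 z x
  obtain ⟨x', y', z', hxy', hyz', hzx'⟩ := exists_cmp_triangle x y z
  obtain ⟨-, -, I3⟩ := hX.2 x y z γ1 γ2 γ3 h1 h10 h11 h2 h20 h21 h3 h30 h31 x' y' z'
    hxy' hyz' hzx'
  have key := I3 0 ⟨le_rfl, dist_nonneg⟩ t ht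
  rw [h30] at key
  have hcz : cmpPt z' x' (dist z x) 0 = z' := by
    rw [cmpPt, zero_div, AffineMap.lineMap_apply_zero]
  rw [hcz] at key
  have hsq : dist z (γ1 t) ^ 2 ≤ dist z' (cmpPt x' y' (dist x y) t) ^ 2 :=
    pow_le_pow_left₀ dist_nonneg key 2
  rw [dist_comm z' _, dist_cmpPt_sq x' y' z' hL hxy' t] at hsq
  rw [dist_comm (γ1 t) z]
  calc dist z (γ1 t) ^ 2 ≤ _ := hsq
  _ = _ := by rw [show dist x' z' = dist x z by rw [dist_comm, hzx', dist_comm], hyz']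

/-- Multiplied (division-free) form of `cat0_dist_point_vertex`. -/
lemma cat0_dist_point_vertex' (hX : CAT0Space X) (x y z : X) {γ1 : ℝ → X}
    (h1 : IsGeodesicOn γ1 0 (dist x y)) (h10 : γ1 0 = x) (h11 : γ1 (dist x y) = y)
    (hL : 0 < dist x y) {t : ℝ} (ht : t ∈ Set.Icc 0 (dist x y)) :
    dist x y * dist (γ1 t) z ^ 2 ≤
      dist x y * (dist x z ^ 2 + t ^ 2)
        - t * (dist x z ^ 2 + dist x y ^ 2 - dist y z ^ 2) := by
  have h := cat0_dist_point_vertex hX x y z h1 h10 h11 hL ht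
  have h' := mul_le_mul_of_nonneg_left h hL.le
  have e : dist x y * ((t / dist x y) * (dist x z ^ 2 + dist x y ^ 2 - dist y z ^ 2))
      = t * (dist x z ^ 2 + dist x y ^ 2 - dist y z ^ 2) := by
    field_simp
  rw [mul_sub, e] at h'
  linarith [h']

end Aux2
/-- In a play of the Lion-Man game in a convex subset of a CAT(0) space in which the man
wins, the comparison angles `∠̄_{L_n}(M_{n-1}, M_n)` tend to `0` and the Alexandrov angles
`β_n = ∠_{L_n}(L_{n-1}, M_n)` tend to `π` (here stated with the index shifted by one:
the angles are taken at `L_{n+1}`, between `L_n` and `M_{n+1}`, along any unit-speed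
geodesics issuing from `L_{n+1}`). -/
theorem stmt12 {X : Type*} [MetricSpace X] (hX : CAT0Space X)
    (A : Set X) (hA : A.Nonempty) (hconv : GeodesicConvex A)
    (D : ℝ) (hD : 0 < D) (L M : ℕ → X) (hplay : IsLionManPlay A D L M)
    (hman : ¬ LionWins L M) :
    Filter.Tendsto (fun n => compAngle (L (n + 1)) (M n) (M (n + 1)))
      Filter.atTop (nhds 0) ∧
    ∀ γ σ : ℕ → ℝ → X,
      (∀ n, IsGeodesicOn (γ n) 0 (dist (L (n + 1)) (L n)) ∧ γ n 0 = L (n + 1) ∧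
        γ n (dist (L (n + 1)) (L n)) = L n) →
      (∀ n, IsGeodesicOn (σ n) 0 (dist (L (n + 1)) (M (n + 1))) ∧ σ n 0 = L (n + 1) ∧
        σ n (dist (L (n + 1)) (M (n + 1))) = M (n + 1)) →
      Filter.Tendsto (fun n => alexAngle (L (n + 1)) (γ n) (σ n))
        Filter.atTop (nhds Real.pi) := by
  obtain ⟨hLA, hMA, hseg, hstep, hMstep⟩ := hplay
  -- `d n` is the distance from the lion to the man's previous position
  set d : ℕ → ℝ := fun n => dist (L (n + 1)) (M n) with hd
  have hdEq : ∀ n, d n = dist (L (n + 1)) (M n) := fun n => rfl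
  -- since `L (n+1)` lies on the geodesic from `L n` to `M n`:
  have hDn : ∀ n, d n = dist (L n) (M n) - min D (dist (L n) (M n)) := by
    intro n
    obtain ⟨S, hS, hLS⟩ := hseg n
    obtain ⟨τ, hτ, hτ0, hτ1, hτS⟩ := segment_exists_unit hS
    obtain ⟨u, hu, huL⟩ := hτS _ hLS
    have h1 : dist (L n) (L (n + 1)) = u := by
      rw [← hτ0, ← huL, hτ 0 ⟨le_rfl, dist_nonneg⟩ u hu, abs_sub_comm, sub_zero,
        abs_of_nonneg hu.1]
    have h2 : dist (L (n + 1)) (M n) = dist (L n) (M n) - u := by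
      have e := hτ u hu (dist (L n) (M n)) ⟨dist_nonneg, le_rfl⟩
      rw [huL, hτ1] at e
      rw [e, abs_of_nonpos (by linarith [hu.2]), neg_sub]
    have hu' : u = min D (dist (L n) (M n)) := by rw [← h1]; exact hstep n
    rw [hdEq n, h2, hu']
  have hd_nonneg : ∀ n, 0 ≤ d n := fun n => dist_nonneg
  have hd_anti : ∀ n, d (n + 1) ≤ d n := by
    intro n
    have h3 : dist (L (n + 1)) (M (n + 1)) ≤ d n + D :=
      le_trans (dist_triangle (L (n + 1)) (M n) (M (n + 1)))
        (add_le_add le_rfl (hMstep n))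
    rw [hDn (n + 1)]
    rcases le_total (dist (L (n + 1)) (M (n + 1))) D with h | h
    · rw [min_eq_right h, sub_self]; exact hd_nonneg n
    · rw [min_eq_left h]; linarith
  have hanti : Antitone d := antitone_nat_of_succ_le hd_anti
  have hbdd : BddBelow (Set.range d) := ⟨0, by rintro _ ⟨n, rfl⟩; exact hd_nonneg n⟩
  set c := ⨅ n, d n with hc
  have hdc : Filter.Tendsto d Filter.atTop (nhds c) := tendsto_atTop_ciInf hanti hbdd
  have hcle : ∀ n, c ≤ d n := fun n => ciInf_le hbdd n
  have hcpos : 0 < c := by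
    rcases lt_or_ge 0 c with h | h
    · exact h
    · exfalso
      apply hman
      have hc0 : c = 0 := le_antisymm h (le_ciInf fun n => hd_nonneg n)
      show Filter.Tendsto (fun n => dist (L (n + 1)) (M n)) Filter.atTop (nhds 0)
      exact hc0 ▸ hdc
  have hdn_pos : ∀ n, 0 < d n := fun n => hcpos.trans_le (hcle n)
  have hDgt : ∀ n, D < dist (L n) (M n) := by
    intro n
    by_contra h
    push_neg at h
    have h0 : d n = 0 := by rw [hDn n, min_eq_right h, sub_self]
    linarith [hdn_pos n]
  have hdD : ∀ n, d n = dist (L n) (M n) - D := fun n => by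
    rw [hDn n, min_eq_left (hDgt n).le]
  have hLL : ∀ n, dist (L n) (L (n + 1)) = D := fun n => by
    rw [hstep n, min_eq_left (hDgt n).le]
  have hLM : ∀ n, dist (L (n + 1)) (M (n + 1)) = d (n + 1) + D := by
    intro n
    have := hdD (n + 1)
    rw [hdEq] at this ⊢
    linarith [this]
  have hLM_pos : ∀ n, 0 < dist (L (n + 1)) (M (n + 1)) := fun n => by
    rw [hLM n]; linarith [hdn_pos (n + 1)]
  -- Part 1: the comparison angles tend to 0
  set Q : ℕ → ℝ := fun n =>
    (dist (L (n + 1)) (M n) ^ 2 + dist (L (n + 1)) (M (n + 1)) ^ 2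
        - dist (M n) (M (n + 1)) ^ 2) /
      (2 * dist (L (n + 1)) (M n) * dist (L (n + 1)) (M (n + 1))) with hQ
  have hcomp : ∀ n, compAngle (L (n + 1)) (M n) (M (n + 1)) = Real.arccos (Q n) :=
    fun n => rfl
  have hQ1 : ∀ n, Q n ≤ 1 := by
    intro n
    have hden : 0 < 2 * dist (L (n + 1)) (M n) * dist (L (n + 1)) (M (n + 1)) := by
      have h1 := hdn_pos n
      rw [hdEq n] at h1
      have h2 := hLM_pos n
      positivity
    rw [hQ, div_le_one hden]
    have htr1 : dist (L (n + 1)) (M (n + 1)) ≤ dist (L (n + 1)) (M n)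
        + dist (M n) (M (n + 1)) := dist_triangle _ _ _
    have htr2 : dist (L (n + 1)) (M n) ≤ dist (L (n + 1)) (M (n + 1))
        + dist (M n) (M (n + 1)) := by
      have := dist_triangle (L (n + 1)) (M (n + 1)) (M n)
      rw [dist_comm (M (n + 1)) (M n)] at this
      exact this
    nlinarith [mul_nonneg (by linarith : (0:ℝ) ≤ dist (M n) (M (n + 1))
        + dist (L (n + 1)) (M (n + 1)) - dist (L (n + 1)) (M n))
      (by linarith : (0:ℝ) ≤ dist (M n) (M (n + 1)) + dist (L (n + 1)) (M n)
        - dist (L (n + 1)) (M (n + 1)))]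
  set q : ℕ → ℝ := fun n =>
    (d n ^ 2 + d (n + 1) ^ 2 + 2 * d (n + 1) * D) / (2 * d n * (d (n + 1) + D)) with hq
  have hq_le : ∀ n, q n ≤ Q n := by
    intro n
    simp only [hq, hQ]
    rw [← hdEq n, hLM n]
    have hden : (0:ℝ) < 2 * d n * (d (n + 1) + D) := by
      have h1 := hdn_pos n; have h2 := hdn_pos (n + 1); positivity
    rw [div_le_div_iff₀ hden hden]
    have hcn1 : dist (M n) (M (n + 1)) ≤ D := hMstep n
    have hcn0 : (0:ℝ) ≤ dist (M n) (M (n + 1)) := dist_nonneg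
    nlinarith [mul_nonneg (mul_nonneg
      (by linarith : (0:ℝ) ≤ D - dist (M n) (M (n + 1)))
      (by linarith : (0:ℝ) ≤ D + dist (M n) (M (n + 1)))) hden.le]
  have hq_tendsto : Filter.Tendsto q Filter.atTop (nhds 1) := by
    have h1 : Filter.Tendsto (fun n => d (n + 1)) Filter.atTop (nhds c) :=
      hdc.comp (Filter.tendsto_add_atTop_nat 1)
    have hnum : Filter.Tendsto (fun n => d n ^ 2 + d (n + 1) ^ 2 + 2 * d (n + 1) * D)
        Filter.atTop (nhds (c ^ 2 + c ^ 2 + 2 * c * D)) := by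
      exact ((hdc.pow 2).add (h1.pow 2)).add ((h1.const_mul 2).mul_const D)
    have hden : Filter.Tendsto (fun n => 2 * d n * (d (n + 1) + D))
        Filter.atTop (nhds (2 * c * (c + D))) :=
      (hdc.const_mul 2).mul (h1.add_const D)
    have hne : (2 * c * (c + D)) ≠ 0 := by positivity
    have hval : (c ^ 2 + c ^ 2 + 2 * c * D) / (2 * c * (c + D)) = 1 := by
      field_simp; ring
    have := hnum.div hden hne
    rw [hval] at this
    exact this
  have hQtendsto : Filter.Tendsto Q Filter.atTop (nhds 1) :=
    tendsto_of_tendsto_of_tendsto_of_le_of_le hq_tendsto tendsto_const_nhds hq_le hQ1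
  have part1 : Filter.Tendsto (fun n => compAngle (L (n + 1)) (M n) (M (n + 1)))
      Filter.atTop (nhds 0) := by
    have h := (Real.continuous_arccos.tendsto 1).comp hQtendsto
    rw [Real.arccos_one] at h
    simp only [hcomp]
    exact h
  refine ⟨part1, ?_⟩
  intro γ σ hγ hσ
  have hFne : Filter.NeBot ((nhdsWithin (0:ℝ) (Set.Ioi 0)) ×ˢ (nhdsWithin (0:ℝ) (Set.Ioi 0))) :=
    Filter.prod_neBot.mpr ⟨nhdsGT_neBot 0, nhdsGT_neBot 0⟩
  -- upper bound: the Alexandrov angle is at most π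
  have hub : ∀ n, alexAngle (L (n + 1)) (γ n) (σ n) ≤ Real.pi := by
    intro n
    rw [alexAngle_def]
    exact Filter.limsup_le_of_le
      (Filter.isCoboundedUnder_le_of_le _ (fun p => compAngle_nonneg _ _ _))
      (Filter.Eventually.of_forall (fun p => compAngle_le_pi _ _ _))
  -- lower bound: the Alexandrov angle is at least π - α n
  have hlb : ∀ n, Real.pi - compAngle (L (n + 1)) (M n) (M (n + 1))
      ≤ alexAngle (L (n + 1)) (γ n) (σ n) := by
    intro n
    obtain ⟨hγg, hγ0, hγ1⟩ := hγ n
    obtain ⟨hσg, hσ0, hσ1⟩ := hσ n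
    have hLLn : dist (L (n + 1)) (L n) = D := by rw [dist_comm]; exact hLL n
    rw [hLLn] at hγg hγ1
    have hdn := hdn_pos n
    rw [hdEq n] at hdn
    have hL'pos := hLM_pos n
    -- the geodesic from `L n` to `M n` through `L (n+1)`
    obtain ⟨S, hS, hLS⟩ := hseg n
    obtain ⟨τ, hτ, hτ0, hτ1, hτS⟩ := segment_exists_unit hS
    have hDMn : dist (L n) (M n) = dist (L (n + 1)) (M n) + D := by
      have := hdD n; rw [hdEq n] at this; linarith
    have hτD : τ D = L (n + 1) := by
      obtain ⟨u, hu, huL⟩ := hτS _ hLS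
      have h1 : dist (L n) (L (n + 1)) = u := by
        rw [← hτ0, ← huL, hτ 0 ⟨le_rfl, dist_nonneg⟩ u hu, abs_sub_comm, sub_zero,
          abs_of_nonneg hu.1]
      rw [hLL n] at h1
      rw [h1, huL]
    -- identify `γ n` with the reversed `τ`
    have hγτ : ∀ t ∈ Set.Icc (0:ℝ) D, γ n t = τ (D - t) := by
      have hψg : IsGeodesicOn (fun r => τ (D - r)) 0 D := by
        intro s hs u hu
        show dist (τ (D - s)) (τ (D - u)) = |s - u|
        rw [hτ (D - s) ⟨by linarith [hs.2], by rw [hDMn]; linarith [hs.1, dist_nonneg (x := L (n+1)) (y := M n)]⟩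
          (D - u) ⟨by linarith [hu.2], by rw [hDMn]; linarith [hu.1, dist_nonneg (x := L (n+1)) (y := M n)]⟩,
          show D - s - (D - u) = u - s by ring, abs_sub_comm]
      have hψ0 : (fun r => τ (D - r)) 0 = L (n + 1) := by
        show τ (D - 0) = L (n + 1); rw [sub_zero]; exact hτD
      have hψ1 : (fun r => τ (D - r)) D = L n := by
        show τ (D - D) = L n; rw [sub_self]; exact hτ0
      intro t ht
      have := geodesic_unique hX (x := L (n + 1)) (y := L n)
        (by rw [hLLn]; exact hγg) hγ0 (by rw [hLLn]; exact hγ1)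
        (by rw [hLLn]; exact hψg) hψ0 (by rw [hLLn]; exact hψ1) t (by rw [hLLn]; exact ht)
      exact this
    have hγMn : ∀ t ∈ Set.Icc (0:ℝ) D, dist (γ n t) (M n) = dist (L (n + 1)) (M n) + t := by
      intro t ht
      have e := hτ (D - t) ⟨by linarith [ht.2], by rw [hDMn]; linarith [ht.1, hdn.le]⟩
        (dist (L n) (M n)) ⟨dist_nonneg, le_rfl⟩
      rw [hτ1] at e
      rw [hγτ t ht, e, hDMn,
        show D - t - (dist (L (n + 1)) (M n) + D) = -(dist (L (n + 1)) (M n) + t) by ring,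
        abs_neg, abs_of_nonneg (by linarith [ht.1, hdn.le])]
    have hγdist : ∀ t ∈ Set.Icc (0:ℝ) D, dist (L (n + 1)) (γ n t) = t := by
      intro t ht
      rw [← hγ0, hγg 0 ⟨le_rfl, hD.le⟩ t ht, zero_sub, abs_neg, abs_of_nonneg ht.1]
    have hσdist : ∀ s ∈ Set.Icc (0:ℝ) (dist (L (n + 1)) (M (n + 1))),
        dist (L (n + 1)) (σ n s) = s := by
      intro s hs
      rw [← hσ0, hσg 0 ⟨le_rfl, dist_nonneg⟩ s hs, zero_sub, abs_neg, abs_of_nonneg hs.1]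
    -- the pointwise comparison-angle bound
    have hkey : ∀ t ∈ Set.Ioc (0:ℝ) D, ∀ s ∈ Set.Ioc (0:ℝ) (dist (L (n + 1)) (M (n + 1))),
        Real.pi - compAngle (L (n + 1)) (M n) (M (n + 1))
          ≤ compAngle (L (n + 1)) (γ n t) (σ n s) := by
      intro t ht s hs
      have htI : t ∈ Set.Icc (0:ℝ) D := ⟨ht.1.le, ht.2⟩
      have hsI : s ∈ Set.Icc (0:ℝ) (dist (L (n + 1)) (M (n + 1))) := ⟨hs.1.le, hs.2⟩
      set dn := dist (L (n + 1)) (M n) with hdn_def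
      set L' := dist (L (n + 1)) (M (n + 1)) with hL'_def
      set cn := dist (M (n + 1)) (M n) with hcn_def
      set Xd := dist (γ n t) (σ n s) with hXd_def
      set Yd := dist (M n) (σ n s) with hYd_def
      -- step B : comparison in triangle (L (n+1), M (n+1), M n)
      have iB : L' * dist (σ n s) (M n) ^ 2 ≤
          L' * (dist (L (n + 1)) (M n) ^ 2 + s ^ 2)
            - s * (dist (L (n + 1)) (M n) ^ 2 + L' ^ 2 - cn ^ 2) := by
        exact cat0_dist_point_vertex' hX (L (n + 1)) (M (n + 1)) (M n)
          hσg hσ0 hσ1 hL'pos hsI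
      rw [dist_comm (σ n s) (M n)] at iB
      -- step C : comparison in triangle (γ n t, M n, σ n s); L (n+1) on side at distance t
      have hγ1'geo : IsGeodesicOn (fun r => τ (D - t + r)) 0 (dist (γ n t) (M n)) := by
        rw [hγMn t htI]
        intro a ha b hb
        show dist (τ (D - t + a)) (τ (D - t + b)) = |a - b|
        rw [hτ (D - t + a) ⟨by linarith [ha.1, ht.2], by rw [hDMn]; linarith [ha.2, ht.1]⟩
          (D - t + b) ⟨by linarith [hb.1, ht.2], by rw [hDMn]; linarith [hb.2, ht.1]⟩,
          show D - t + a - (D - t + b) = a - b by ring]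
      have hγ1'0 : (fun r => τ (D - t + r)) 0 = γ n t := by
        show τ (D - t + 0) = γ n t; rw [add_zero, hγτ t htI]
      have hγ1'1 : (fun r => τ (D - t + r)) (dist (γ n t) (M n)) = M n := by
        show τ (D - t + dist (γ n t) (M n)) = M n
        rw [hγMn t htI, show D - t + (dist (L (n + 1)) (M n) + t) = dist (L (n + 1)) (M n) + D by ring,
          ← hDMn]
        exact hτ1
      have hγ1'pos : 0 < dist (γ n t) (M n) := by
        rw [hγMn t htI]; linarith [ht.1, hdn]
      have htmem : t ∈ Set.Icc 0 (dist (γ n t) (M n)) := by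
        rw [hγMn t htI]; exact ⟨ht.1.le, by linarith [hdn.le]⟩
      have iC : dist (γ n t) (M n) * dist ((fun r => τ (D - t + r)) t) (σ n s) ^ 2 ≤
          dist (γ n t) (M n) * (dist (γ n t) (σ n s) ^ 2 + t ^ 2)
            - t * (dist (γ n t) (σ n s) ^ 2 + dist (γ n t) (M n) ^ 2
              - dist (M n) (σ n s) ^ 2) :=
        cat0_dist_point_vertex' hX (γ n t) (M n) (σ n s) hγ1'geo hγ1'0 hγ1'1 hγ1'pos htmem
      have hτt : (fun r => τ (D - t + r)) t = L (n + 1) := by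
        show τ (D - t + t) = L (n + 1); rw [sub_add_cancel]; exact hτD
      rw [hτt, hσdist s hsI, hγMn t htI] at iC
      -- combine: Xd^2 ≥ t^2 + s^2 + 2 t s Q n
      have hXd2 : (t ^ 2 + s ^ 2 - Xd ^ 2) * (2 * dn * L') ≤
          -(dn ^ 2 + L' ^ 2 - cn ^ 2) * (2 * t * s) := by
        have h1 := mul_le_mul_of_nonneg_left iC hL'pos.le
        have h2 := mul_le_mul_of_nonneg_left iB ht.1.le
        nlinarith [h1, h2]
      -- conclude via arccos monotonicity
      have hXle : Xd ≤ t + s := by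
        calc Xd ≤ dist (γ n t) (L (n + 1)) + dist (L (n + 1)) (σ n s) := dist_triangle _ _ _
        _ = t + s := by rw [dist_comm (γ n t) (L (n + 1)), hγdist t htI, hσdist s hsI]
      have hquot : (t ^ 2 + s ^ 2 - Xd ^ 2) / (2 * t * s) ≤
          -((dn ^ 2 + L' ^ 2 - cn ^ 2) / (2 * dn * L')) := by
        rw [← neg_div]
        rw [div_le_div_iff₀ (mul_pos (mul_pos two_pos ht.1) hs.1)
          (mul_pos (mul_pos two_pos hdn) hL'pos)]
        linarith [hXd2]
      have hquot_ge : (-1 : ℝ) ≤ (t ^ 2 + s ^ 2 - Xd ^ 2) / (2 * t * s) := by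
        rw [le_div_iff₀ (mul_pos (mul_pos two_pos ht.1) hs.1)]
        nlinarith [hXle, dist_nonneg (x := γ n t) (y := σ n s)]
      have hgoal : compAngle (L (n + 1)) (γ n t) (σ n s) =
          Real.arccos ((t ^ 2 + s ^ 2 - Xd ^ 2) / (2 * t * s)) := by
        rw [compAngle_def, hγdist t htI, hσdist s hsI]
      have hcompn : compAngle (L (n + 1)) (M n) (M (n + 1)) =
          Real.arccos ((dn ^ 2 + L' ^ 2 - cn ^ 2) / (2 * dn * L')) := by
        rw [compAngle_def, hcn_def, dist_comm (M (n + 1)) (M n)]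
      rw [hgoal, hcompn, ← Real.arccos_neg]
      exact arccos_antitone hquot
    -- pass to the limsup
    rw [alexAngle_def]
    apply Filter.le_limsup_of_frequently_le
    · apply Filter.Eventually.frequently
      apply Filter.eventually_of_mem
        (Filter.prod_mem_prod (Ioc_mem_nhdsGT hD)
          (Ioc_mem_nhdsGT hL'pos))
      rintro ⟨t, s⟩ ⟨ht, hs⟩
      exact hkey t ht s hs
    · exact ⟨Real.pi, Filter.eventually_map.mpr
        (Filter.Eventually.of_forall (fun p => compAngle_le_pi _ _ _))⟩
  -- squeeze
  have hsq : Filter.Tendsto (fun n => Real.pi - compAngle (L (n + 1)) (M n) (M (n + 1)))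
      Filter.atTop (nhds Real.pi) := by
    have h := (tendsto_const_nhds :
      Filter.Tendsto (fun _ : ℕ => Real.pi) Filter.atTop (nhds Real.pi)).sub part1
    simpa using h
  exact tendsto_of_tendsto_of_tendsto_of_le_of_le hsq tendsto_const_nhds hlb hub
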